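/- Fix integers n ≥ 1 and m ≥ 1. For every convex body K ⊂ ℝ^n and every invertible affine map A: ℝ^n → ℝ^n, one has Vol_n(AK)^{nm−m}·Vol_{nm}(Π^{∘,m}(AK)) = Vol_n(K)^{nm−m}·Vol_{nm}(Π^{∘,m}K); that is, the functional K ↦ Vol_n(K)^{nm−m}·Vol_{nm}(Π^{∘,m}K) on convex bodies in ℝ^n is invariant under invertible affine transformations. -/

import Mathlib

open Pointwise MeasureTheory Filter Metric Topology

noncomputable section

abbrev Euc (n : ℕ) : Type := EuclideanSpace ℝ (Fin n)
abbrev EucM (n m : ℕ) : Type := EuclideanSpace ℝ (Fin m × Fin n)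

/-- A convex body in `ℝ^n`: a compact convex set with nonempty interior. -/
def IsConvexBody {n : ℕ} (K : Set (Euc n)) : Prop :=
  Convex ℝ K ∧ IsCompact K ∧ (interior K).Nonempty

/-- The `i`-th `ℝ^n` block of `x̄ ∈ ℝ^{nm}`. -/
def blk {n m : ℕ} (x : EucM n m) (i : Fin m) : Euc n := WithLp.toLp 2 (fun k => x (i, k))

/-- `C_{x̄} = conv{0, x_1, …, x_m}`. -/
def cbody {n m : ℕ} (x : EucM n m) : Set (Euc n) :=
  convexHull ℝ (insert 0 (Set.range (blk x)))

/-- The mixed volume `V_n(K[n−1], L)`, defined via the one-sided limit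
`(1/n)·lim_{ε→0⁺} (Vol_n(K+εL) − Vol_n(K))/ε`. -/
def mixedVol1 (n : ℕ) (K L : Set (Euc n)) : ℝ :=
  (n : ℝ)⁻¹ * limUnder (𝓝[>] (0:ℝ))
    (fun ε : ℝ => ((volume (K + ε • L)).toReal - (volume K).toReal) / ε)

/-- The `m`th-order polar projection body `Π^{∘,m}K ⊆ ℝ^{nm}`. -/
def polarProjBody (n m : ℕ) (K : Set (Euc n)) : Set (EucM n m) :=
  {x | (n : ℝ) * mixedVol1 n K (cbody (-x)) ≤ 1}

/-- The `m`th-order covariogram `g_{K,m}(x̄) = Vol_n(K ∩ ⋂ᵢ (xᵢ + K))`. -/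
def covariogram (n m : ℕ) (K : Set (Euc n)) (x : EucM n m) : ℝ :=
  (volume (K ∩ ⋂ i : Fin m, (blk x i +ᵥ K))).toReal

/-- The closed Euclidean unit ball `B_2^n`. -/
def ball01 (n : ℕ) : Set (Euc n) := Metric.closedBall 0 1

/-- `ω_k = Vol_k(B_2^k)`. -/
def omega (k : ℕ) : ℝ := (volume (Metric.closedBall (0 : Euc k) 1)).toReal

/-- The mean width `W_n(L) = (1/ω_n)·V_n(B_2^n[n−1], L)`. -/
def meanWidth (n : ℕ) (L : Set (Euc n)) : ℝ := (omega n)⁻¹ * mixedVol1 n (ball01 n) L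

/-- `𝔼[W_n(C_Θ̄)^{−nm}]`: the average of `θ̄ ↦ W_n(C_{θ̄})^{−nm}` over the unit sphere
`S^{nm−1}` with respect to the uniform (rotation-invariant) probability measure, realized
as the normalized `(nm−1)`-dimensional Hausdorff measure on the sphere. -/
def EWinv (n m : ℕ) : ℝ :=
  ⨍ θ in Metric.sphere (0 : EucM n m) 1,
    (meanWidth n (cbody θ) ^ (n * m))⁻¹ ∂(μH[(n * m - 1 : ℝ)])

/-- The surface area `Vol_{n−1}(∂K) = lim_{ε→0⁺} (Vol_n(K+εB_2^n) − Vol_n(K))/ε`. -/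
def surfaceArea (n : ℕ) (K : Set (Euc n)) : ℝ :=
  limUnder (𝓝[>] (0:ℝ))
    (fun ε : ℝ => ((volume (K + ε • ball01 n)).toReal - (volume K).toReal) / ε)

/-- An ellipsoid: the image of `B_2^n` under an invertible affine map. -/
def IsEllipsoid {n : ℕ} (K : Set (Euc n)) : Prop :=
  ∃ A : Euc n ≃ᵃ[ℝ] Euc n, K = A '' ball01 n

/-- An `n`-dimensional simplex: the convex hull of `n+1` affinely independent points. -/
def IsSimplex {n : ℕ} (K : Set (Euc n)) : Prop :=
  ∃ v : Fin (n + 1) → Euc n, AffineIndependent ℝ v ∧ K = convexHull ℝ (Set.range v)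

/-- `L` is a homothet of `K`: `L = λ•K + b` with `λ > 0`. -/
def Homothetic {n : ℕ} (K L : Set (Euc n)) : Prop :=
  ∃ l : ℝ, 0 < l ∧ ∃ b : Euc n, L = b +ᵥ l • K

/-- `E` is the John ellipsoid of `K`: the maximal-volume ellipsoid contained in `K`. -/
def IsJohnEllipsoid {n : ℕ} (K E : Set (Euc n)) : Prop :=
  IsEllipsoid E ∧ E ⊆ K ∧ ∀ E' : Set (Euc n), IsEllipsoid E' → E' ⊆ K → volume E' ≤ volume E

/-- The volume ratio `v.r.(K) = (Vol_n(K)/Vol_n(E))^{1/n}` of `K` relative to an ellipsoid `E`. -/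
def volumeRatio {n : ℕ} (K E : Set (Euc n)) : ℝ :=
  ((volume K).toReal / (volume E).toReal) ^ ((n : ℝ)⁻¹)

/-- The minimal isoperimetric ratio `∂_K = min_{T ∈ GL_n(ℝ)} Vol_{n−1}(∂(TK))/Vol_n(TK)^{(n−1)/n}`. -/
def minIsoRatio (n : ℕ) (K : Set (Euc n)) : ℝ :=
  sInf {r : ℝ | ∃ T : Euc n ≃ₗ[ℝ] Euc n,
    r = surfaceArea n (T '' K) / (volume (T '' K)).toReal ^ (((n : ℝ) - 1) / (n : ℝ))}

/-- The mixed volume of an `n`-tuple of sets (indexed by `ι` with `card ι = n`),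
`V_n(K_1,…,K_n) = (1/n!)·Σ_{∅≠S} (−1)^{n−|S|}·Vol_n(Σ_{i∈S} K_i)`. -/
def mixedVolume (n : ℕ) {ι : Type} [Fintype ι] (K : ι → Set (Euc n)) : ℝ :=
  (n.factorial : ℝ)⁻¹ *
    ∑ S ∈ Finset.univ.powerset.filter (fun S : Finset ι => S.Nonempty),
      (-1 : ℝ) ^ (n - S.card) * (volume (∑ i ∈ S, K i)).toReal

/-- The `m`th-order mixed polar projection body `Π^{∘,m}(K_1,…,K_{n−1}) ⊆ ℝ^{nm}`. -/
def mixedPolarProjBody (n m : ℕ) (K : Fin (n - 1) → Set (Euc n)) : Set (EucM n m) :=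
  {x | (n : ℝ) * mixedVolume n (fun o : Option (Fin (n - 1)) => o.elim (cbody (-x)) K) ≤ 1}

namespace PPB
variable {n m : ℕ}


lemma blk_add (x y : EucM n m) (i : Fin m) : blk (x + y) i = blk x i + blk y i := by
  ext k; simp [blk]

lemma blk_smul (r : ℝ) (x : EucM n m) (i : Fin m) : blk (r • x) i = r • blk x i := by
  ext k; simp [blk]

lemma blk_neg (x : EucM n m) (i : Fin m) : blk (-x) i = -(blk x i) := by
  ext k; simp [blk]

/-- blockwise application of a linear equivalence. -/
def blockMap (S : Euc n ≃ₗ[ℝ] Euc n) : EucM n m ≃ₗ[ℝ] EucM n m where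
  toFun x := WithLp.toLp 2 (fun p : Fin m × Fin n => S (blk x p.1) p.2)
  invFun x := WithLp.toLp 2 (fun p : Fin m × Fin n => S.symm (blk x p.1) p.2)
  map_add' x y := by ext p; simp [blk_add, map_add]
  map_smul' r x := by ext p; simp [blk_smul, _root_.map_smul]
  left_inv x := by
    ext p
    show S.symm (blk (WithLp.toLp 2 (fun q : Fin m × Fin n => S (blk x q.1) q.2)) p.1) p.2 = x p
    rw [show blk (WithLp.toLp 2 (fun q : Fin m × Fin n => S (blk x q.1) q.2)) p.1 = S (blk x p.1) from rfl]
    simp only [LinearEquiv.symm_apply_apply]; rfl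
  right_inv x := by
    ext p
    show S (blk (WithLp.toLp 2 (fun q : Fin m × Fin n => S.symm (blk x q.1) q.2)) p.1) p.2 = x p
    rw [show blk (WithLp.toLp 2 (fun q : Fin m × Fin n => S.symm (blk x q.1) q.2)) p.1 = S.symm (blk x p.1) from rfl]
    simp only [LinearEquiv.apply_symm_apply]; rfl

lemma blk_blockMap (S : Euc n ≃ₗ[ℝ] Euc n) (x : EucM n m) (i : Fin m) :
    blk (blockMap S x) i = S (blk x i) := rfl

lemma cbody_image (g : Euc n →ₗ[ℝ] Euc n) (y z : EucM n m)
    (hz : ∀ i, blk z i = g (blk y i)) : g '' cbody y = cbody z := by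
  unfold cbody
  rw [g.image_convexHull, Set.image_insert_eq, map_zero, ← Set.range_comp]
  have h : g ∘ blk y = blk z := funext fun i => (hz i).symm
  rw [h]


lemma map_div_nhdsGT {c : ℝ} (hc : 0 < c) :
    Filter.map (fun ε : ℝ => ε / c) (𝓝[>] (0:ℝ)) = 𝓝[>] (0:ℝ) := by
  have key : ∀ a : ℝ, 0 < a → Filter.Tendsto (fun ε : ℝ => ε * a) (𝓝[>] (0:ℝ)) (𝓝[>] (0:ℝ)) := by
    intro a ha
    apply tendsto_nhdsWithin_of_tendsto_nhds_of_eventually_within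
    · have h0 : Filter.Tendsto (fun ε : ℝ => ε * a) (𝓝 (0:ℝ)) (𝓝 ((0:ℝ) * a)) :=
        (continuous_id.mul continuous_const).tendsto 0
      rw [zero_mul] at h0
      exact h0.mono_left nhdsWithin_le_nhds
    · exact eventually_mem_nhdsWithin.mono fun x hx => mul_pos hx ha
  refine le_antisymm ?_ ?_
  · exact (by simpa [div_eq_mul_inv] using key c⁻¹ (by positivity) :
      Filter.Tendsto (fun ε : ℝ => ε / c) (𝓝[>] (0:ℝ)) (𝓝[>] (0:ℝ)))
  · have h2 := key c hc
    have : Filter.map (fun ε : ℝ => ε / c) (Filter.map (fun ε : ℝ => ε * c) (𝓝[>] (0:ℝ)))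
        = 𝓝[>] (0:ℝ) := by
      rw [Filter.map_map]
      have : ((fun ε : ℝ => ε / c) ∘ fun ε : ℝ => ε * c) = id := by
        funext x; simp [mul_div_cancel_right₀, hc.ne']
      rw [this, Filter.map_id]
    calc 𝓝[>] (0:ℝ) = Filter.map (fun ε : ℝ => ε / c) (Filter.map (fun ε : ℝ => ε * c) (𝓝[>] (0:ℝ))) := this.symm
      _ ≤ Filter.map (fun ε : ℝ => ε / c) (𝓝[>] (0:ℝ)) := Filter.map_mono h2

lemma image_add_eq (T : Euc n ≃ₗ[ℝ] Euc n) (X Y : Set (Euc n)) :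
    ⇑T '' (X + Y) = ⇑T '' X + ⇑T '' Y := by
  ext z
  simp only [Set.mem_image, Set.mem_add]
  constructor
  · rintro ⟨w, ⟨x, hx, y, hy, rfl⟩, rfl⟩
    exact ⟨T x, ⟨x, hx, rfl⟩, T y, ⟨y, hy, rfl⟩, (map_add T x y).symm⟩
  · rintro ⟨_, ⟨x, hx, rfl⟩, _, ⟨y, hy, rfl⟩, rfl⟩
    exact ⟨x + y, ⟨x, hx, y, hy, rfl⟩, map_add T x y⟩

lemma image_smul_eq (g : Euc n → Euc n) (hg : ∀ (r : ℝ) x, g (r • x) = r • g x)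
    (r : ℝ) (X : Set (Euc n)) :
    g '' (r • X) = r • (g '' X) := by
  ext z
  simp only [Set.mem_image, Set.mem_smul_set]
  constructor
  · rintro ⟨_, ⟨x, hx, rfl⟩, rfl⟩
    exact ⟨g x, ⟨x, hx, rfl⟩, (hg r x).symm⟩
  · rintro ⟨_, ⟨x, hx, rfl⟩, rfl⟩
    exact ⟨r • x, ⟨x, hx, rfl⟩, hg r x⟩

lemma vadd_add_comm (a : Euc n) (X Y : Set (Euc n)) : (a +ᵥ X) + Y = a +ᵥ (X + Y) := by
  ext z
  simp only [Set.mem_add, Set.mem_vadd_set]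
  constructor
  · rintro ⟨_, ⟨x, hx, rfl⟩, y, hy, rfl⟩
    exact ⟨x + y, ⟨x, hx, y, hy, rfl⟩, by simp [vadd_eq_add]; abel⟩
  · rintro ⟨_, ⟨x, hx, y, hy, rfl⟩, rfl⟩
    exact ⟨a +ᵥ x, ⟨x, hx, rfl⟩, y, hy, by simp [vadd_eq_add]; abel⟩

lemma mixedVol1_vadd (a : Euc n) (K L : Set (Euc n)) :
    mixedVol1 n (a +ᵥ K) L = mixedVol1 n K L := by
  unfold mixedVol1
  congr 1
  apply congrArg
  funext ε
  rw [vadd_add_comm, measure_vadd, measure_vadd]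

lemma mixedVol1_image (T : Euc n ≃ₗ[ℝ] Euc n) (K L : Set (Euc n)) :
    mixedVol1 n (⇑T '' K) L
      = mixedVol1 n K (|LinearMap.det (T : Euc n →ₗ[ℝ] Euc n)| • (⇑T.symm '' L)) := by
  set c : ℝ := |LinearMap.det (T : Euc n →ₗ[ℝ] Euc n)| with hcdef
  have hd : LinearMap.det (T : Euc n →ₗ[ℝ] Euc n) ≠ 0 := (LinearEquiv.isUnit_det' T).ne_zero
  have hc : 0 < c := abs_pos.mpr hd
  set M : Set (Euc n) := ⇑T.symm '' L with hM
  have himg : ∀ S : Set (Euc n), volume (⇑T '' S) = ENNReal.ofReal c * volume S := fun S =>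
    Measure.addHaar_image_linearMap volume (T : Euc n →ₗ[ℝ] Euc n) S
  have hTM : ⇑T '' M = L := by
    rw [hM, Set.image_image]; simp
  have hvol : ∀ ε : ℝ, volume (⇑T '' K + ε • L) = ENNReal.ofReal c * volume (K + ε • M) := by
    intro ε
    rw [← hTM, ← image_smul_eq ⇑T (fun r x => map_smul T r x) ε M, ← image_add_eq]
    exact himg _
  have htoReal : ∀ S : Set (Euc n), (volume (⇑T '' S)).toReal = c * (volume S).toReal := by
    intro S
    rw [himg S, ENNReal.toReal_mul, ENNReal.toReal_ofReal hc.le]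
  unfold mixedVol1
  congr 1
  have hfun : (fun ε : ℝ => ((volume (⇑T '' K + ε • L)).toReal - (volume (⇑T '' K)).toReal) / ε)
      = (fun δ : ℝ => ((volume (K + δ • (c • M))).toReal - (volume K).toReal) / δ)
        ∘ (fun ε : ℝ => ε / c) := by
    funext ε
    have hsm : (ε / c) • (c • M) = ε • M := by
      rw [smul_smul, div_mul_cancel₀ _ hc.ne']
    simp only [Function.comp_apply, hsm]
    rw [show volume (⇑T '' K + ε • L) = ENNReal.ofReal c * volume (K + ε • M) from hvol ε,
      ENNReal.toReal_mul, ENNReal.toReal_ofReal hc.le, htoReal K]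
    rw [div_div_eq_mul_div]
    ring
  rw [hfun]
  unfold limUnder
  rw [← Filter.map_map, map_div_nhdsGT hc]


lemma det_blockMap (S : Euc n ≃ₗ[ℝ] Euc n) :
    LinearMap.det ((blockMap S : EucM n m ≃ₗ[ℝ] EucM n m) : EucM n m →ₗ[ℝ] EucM n m)
      = LinearMap.det (S : Euc n →ₗ[ℝ] Euc n) ^ m := by
  classical
  set b1 : Module.Basis (Fin n) ℝ (Euc n) := (EuclideanSpace.basisFun (Fin n) ℝ).toBasis
  set b2 : Module.Basis (Fin m × Fin n) ℝ (EucM n m) :=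
    (EuclideanSpace.basisFun (Fin m × Fin n) ℝ).toBasis
  have hmat : LinearMap.toMatrix b2 b2
        ((blockMap S : EucM n m ≃ₗ[ℝ] EucM n m) : EucM n m →ₗ[ℝ] EucM n m)
      = Matrix.reindex (Equiv.prodComm (Fin n) (Fin m)) (Equiv.prodComm (Fin n) (Fin m))
          (Matrix.blockDiagonal fun _ : Fin m =>
            LinearMap.toMatrix b1 b1 (S : Euc n →ₗ[ℝ] Euc n)) := by
    ext ⟨i, k⟩ ⟨j, l⟩
    rw [LinearMap.toMatrix_apply]
    have hb2 : b2 (j, l) = EuclideanSpace.single (j, l) 1 := by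
      simp [b2, EuclideanSpace.basisFun_apply]
    have hrepr : ∀ v : EucM n m, b2.repr v (i, k) = v (i, k) := fun v => rfl
    rw [hb2, hrepr]
    have happly : ((blockMap S : EucM n m ≃ₗ[ℝ] EucM n m) : EucM n m →ₗ[ℝ] EucM n m)
        (EuclideanSpace.single (j, l) 1) (i, k)
        = S (blk (EuclideanSpace.single (j, l) 1) i) k := rfl
    rw [happly]
    simp only [Matrix.reindex_apply, Matrix.submatrix_apply, Equiv.prodComm_symm,
      Equiv.prodComm_apply, Prod.swap_prod_mk, Matrix.blockDiagonal_apply]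
    by_cases hij : i = j
    · subst hij
      have hblk : blk (EuclideanSpace.single ((i : Fin m), l) (1:ℝ)) i
          = EuclideanSpace.single l 1 := by
        ext k'
        simp [blk, EuclideanSpace.single_apply, Prod.ext_iff]
      rw [hblk]
      simp only [if_pos rfl]
      rw [LinearMap.toMatrix_apply]
      have hb1 : b1 l = EuclideanSpace.single l 1 := by
        simp [b1, EuclideanSpace.basisFun_apply]
      have hrepr1 : ∀ v : Euc n, b1.repr v k = v k := fun v => rfl
      rw [hb1, hrepr1]
      rfl
    · have hblk : blk (EuclideanSpace.single ((j : Fin m), l) (1:ℝ)) i = 0 := by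
        ext k'
        simp only [blk, EuclideanSpace.single_apply, Prod.ext_iff]
        rw [if_neg (by tauto)]
        rfl
      rw [hblk]
      simp [hij, Ne.symm hij]
  rw [← LinearMap.det_toMatrix b2, hmat, Matrix.det_reindex_self, Matrix.det_blockDiagonal]
  simp [LinearMap.det_toMatrix]



/-- The map `x ↦ |det T| • (T⁻¹ applied blockwise)` on `ℝ^{nm}`. -/
def Gmap (T : Euc n ≃ₗ[ℝ] Euc n) : EucM n m ≃ₗ[ℝ] EucM n m :=
  (blockMap T.symm).trans
    (LinearEquiv.smulOfNeZero ℝ (EucM n m) |LinearMap.det (T : Euc n →ₗ[ℝ] Euc n)|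
      (abs_ne_zero.mpr (LinearEquiv.isUnit_det' T).ne_zero))

lemma Gmap_apply (T : Euc n ≃ₗ[ℝ] Euc n) (x : EucM n m) :
    Gmap T x = |LinearMap.det (T : Euc n →ₗ[ℝ] Euc n)| • (blockMap T.symm x) := rfl

lemma polarProjBody_vadd (a : Euc n) (K : Set (Euc n)) :
    polarProjBody n m (a +ᵥ K) = polarProjBody n m K := by
  unfold polarProjBody
  ext x
  simp only [Set.mem_setOf_eq, mixedVol1_vadd]

lemma polarProjBody_image (T : Euc n ≃ₗ[ℝ] Euc n) (K : Set (Euc n)) :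
    polarProjBody n m (⇑T '' K) = (Gmap T) ⁻¹' polarProjBody n m K := by
  set c : ℝ := |LinearMap.det (T : Euc n →ₗ[ℝ] Euc n)| with hcdef
  ext x
  simp only [polarProjBody, Set.mem_setOf_eq, Set.mem_preimage]
  rw [mixedVol1_image T K (cbody (-x))]
  have hset : c • (⇑T.symm '' cbody (-x)) = cbody (-(Gmap T x)) := by
    have h1 : c • (⇑T.symm '' cbody (-x))
        = (fun v => c • T.symm v) '' cbody (-x) := by
      rw [← Set.image_smul, Set.image_image]
    rw [h1]
    have h2 : (fun v => c • T.symm v) = ⇑(c • (T.symm : Euc n →ₗ[ℝ] Euc n)) := by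
      funext v; simp
    rw [h2]
    apply cbody_image
    intro i
    rw [blk_neg, Gmap_apply, blk_smul, blk_blockMap, blk_neg]
    simp [smul_neg, hcdef]
  rw [hset]

lemma preimage_eq_image_symm (G : EucM n m ≃ₗ[ℝ] EucM n m) (s : Set (EucM n m)) :
    G ⁻¹' s = ⇑G.symm '' s := by
  ext z
  simp only [Set.mem_preimage, Set.mem_image]
  constructor
  · intro h; exact ⟨G z, h, by simp⟩
  · rintro ⟨w, hw, rfl⟩; simpa using hw

lemma det_Gmap_symm_abs (T : Euc n ≃ₗ[ℝ] Euc n)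
    (c : ℝ) (hc : c = |LinearMap.det (T : Euc n →ₗ[ℝ] Euc n)|) (hc0 : 0 < c) :
    |LinearMap.det (((Gmap T).symm : EucM n m ≃ₗ[ℝ] EucM n m) : EucM n m →ₗ[ℝ] EucM n m)|
      = c ^ m / c ^ (m * n) := by
  have hdTs : LinearMap.det ((T.symm : Euc n ≃ₗ[ℝ] Euc n) : Euc n →ₗ[ℝ] Euc n)
      * LinearMap.det ((T : Euc n ≃ₗ[ℝ] Euc n) : Euc n →ₗ[ℝ] Euc n) = 1 := by
    rw [← LinearMap.det_comp]
    have h : ((T.symm : Euc n ≃ₗ[ℝ] Euc n) : Euc n →ₗ[ℝ] Euc n) ∘ₗ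
        ((T : Euc n ≃ₗ[ℝ] Euc n) : Euc n →ₗ[ℝ] Euc n) = LinearMap.id := by
      ext v; simp
    rw [h, LinearMap.det_id]
  have habsTs : |LinearMap.det ((T.symm : Euc n ≃ₗ[ℝ] Euc n) : Euc n →ₗ[ℝ] Euc n)| = c⁻¹ := by
    have h2 := congrArg abs hdTs
    rw [abs_mul, abs_one, ← hc] at h2
    exact eq_inv_of_mul_eq_one_left h2
  have hdetG : |LinearMap.det ((Gmap T : EucM n m ≃ₗ[ℝ] EucM n m) : EucM n m →ₗ[ℝ] EucM n m)|
      = c ^ (m * n) * (c⁻¹) ^ m := by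
    have hcomp : ((Gmap T : EucM n m ≃ₗ[ℝ] EucM n m) : EucM n m →ₗ[ℝ] EucM n m)
        = (c • (LinearMap.id : EucM n m →ₗ[ℝ] EucM n m)) ∘ₗ
          ((blockMap T.symm : EucM n m ≃ₗ[ℝ] EucM n m) : EucM n m →ₗ[ℝ] EucM n m) := by
      refine LinearMap.ext fun v => ?_
      rw [LinearMap.comp_apply]
      show Gmap T v = (c • (LinearMap.id : EucM n m →ₗ[ℝ] EucM n m)) (blockMap T.symm v)
      rw [LinearMap.smul_apply, LinearMap.id_apply, Gmap_apply, ← hc]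
    have hrank : Module.finrank ℝ (EucM n m) = m * n := by
      rw [finrank_euclideanSpace]
      simp [Fintype.card_prod]
    rw [hcomp, LinearMap.det_comp, LinearMap.det_smul, LinearMap.det_id, det_blockMap,
      hrank, mul_one, abs_mul, abs_pow, abs_pow, abs_of_pos hc0, habsTs]
  have hGsG : LinearMap.det (((Gmap T).symm : EucM n m ≃ₗ[ℝ] EucM n m) : EucM n m →ₗ[ℝ] EucM n m)
      * LinearMap.det ((Gmap T : EucM n m ≃ₗ[ℝ] EucM n m) : EucM n m →ₗ[ℝ] EucM n m) = 1 := by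
    rw [← LinearMap.det_comp]
    have h : (((Gmap T).symm : EucM n m ≃ₗ[ℝ] EucM n m) : EucM n m →ₗ[ℝ] EucM n m) ∘ₗ
        ((Gmap T : EucM n m ≃ₗ[ℝ] EucM n m) : EucM n m →ₗ[ℝ] EucM n m) = LinearMap.id := by
      ext v; simp
    rw [h, LinearMap.det_id]
  have h3 := congrArg abs hGsG
  rw [abs_mul, abs_one, hdetG] at h3
  have h4 := eq_inv_of_mul_eq_one_left h3
  rw [h4, inv_pow, mul_inv, inv_inv, mul_comm, ← div_eq_mul_inv]


end PPB

theorem petty_product_affine_invariant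
    (n m : ℕ) (hn : 1 ≤ n) (hm : 1 ≤ m)
    (K : Set (Euc n)) (hK : IsConvexBody K) (A : Euc n ≃ᵃ[ℝ] Euc n) :
    (volume (A '' K)).toReal ^ (n * m - m) * (volume (polarProjBody n m (A '' K))).toReal =
      (volume K).toReal ^ (n * m - m) * (volume (polarProjBody n m K)).toReal := by
  classical
  set T : Euc n ≃ₗ[ℝ] Euc n := A.linear with hT
  set a : Euc n := A 0 with ha
  set c : ℝ := |LinearMap.det (T : Euc n →ₗ[ℝ] Euc n)| with hcdef
  have hd : LinearMap.det (T : Euc n →ₗ[ℝ] Euc n) ≠ 0 := (LinearEquiv.isUnit_det' T).ne_zero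
  have hc0 : 0 < c := abs_pos.mpr hd
  have hAx : ∀ x : Euc n, A x = a +ᵥ T x := by
    intro x
    have h := (A : Euc n →ᵃ[ℝ] Euc n).map_vadd (0 : Euc n) x
    simp only [vadd_eq_add, add_zero] at h
    rw [show ((A : Euc n →ᵃ[ℝ] Euc n) : Euc n → Euc n) = ⇑A from rfl] at h
    rw [h]
    rw [show (A : Euc n →ᵃ[ℝ] Euc n).linear x = T x from rfl, vadd_eq_add, ha]
    exact add_comm _ _
  have hAK : ⇑A '' K = a +ᵥ (⇑T '' K) := by
    ext z
    simp only [Set.mem_image, Set.mem_vadd_set]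
    constructor
    · rintro ⟨x, hx, rfl⟩
      exact ⟨T x, ⟨x, hx, rfl⟩, (hAx x).symm⟩
    · rintro ⟨_, ⟨x, hx, rfl⟩, rfl⟩
      exact ⟨x, hx, (hAx x)⟩
  have hvolK : (volume (⇑A '' K)).toReal = c * (volume K).toReal := by
    rw [hAK, measure_vadd,
      show ⇑T '' K = ⇑(T : Euc n →ₗ[ℝ] Euc n) '' K from rfl,
      Measure.addHaar_image_linearMap volume (T : Euc n →ₗ[ℝ] Euc n) K,
      ENNReal.toReal_mul, ENNReal.toReal_ofReal hc0.le]
  have hPi : polarProjBody n m (⇑A '' K)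
      = ⇑((PPB.Gmap T).symm : EucM n m ≃ₗ[ℝ] EucM n m) '' polarProjBody n m K := by
    rw [hAK, PPB.polarProjBody_vadd, PPB.polarProjBody_image, PPB.preimage_eq_image_symm]
  have hvolPi : (volume (polarProjBody n m (⇑A '' K))).toReal
      = (c ^ m / c ^ (m * n)) * (volume (polarProjBody n m K)).toReal := by
    rw [hPi,
      show ⇑((PPB.Gmap T).symm : EucM n m ≃ₗ[ℝ] EucM n m) '' polarProjBody n m K
        = ⇑(((PPB.Gmap T).symm : EucM n m ≃ₗ[ℝ] EucM n m) : EucM n m →ₗ[ℝ] EucM n m) ''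
            polarProjBody n m K from rfl,
      Measure.addHaar_image_linearMap volume
        (((PPB.Gmap T).symm : EucM n m ≃ₗ[ℝ] EucM n m) : EucM n m →ₗ[ℝ] EucM n m)
        (polarProjBody n m K),
      ENNReal.toReal_mul,
      PPB.det_Gmap_symm_abs T c hcdef hc0,
      ENNReal.toReal_ofReal (by positivity)]
  rw [hvolK, hvolPi, mul_pow]
  have hle : m ≤ n * m := Nat.le_mul_of_pos_left m (by omega)
  have hcpow : c ^ (n * m - m) * (c ^ m / c ^ (m * n)) = 1 := by
    rw [mul_div_assoc', ← pow_add, Nat.sub_add_cancel hle, mul_comm m n]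
    exact div_self (pow_ne_zero _ hc0.ne')
  calc c ^ (n * m - m) * (volume K).toReal ^ (n * m - m) *
        (c ^ m / c ^ (m * n) * (volume (polarProjBody n m K)).toReal)
      = (c ^ (n * m - m) * (c ^ m / c ^ (m * n))) *
        ((volume K).toReal ^ (n * m - m) * (volume (polarProjBody n m K)).toReal) := by ring
    _ = (volume K).toReal ^ (n * m - m) * (volume (polarProjBody n m K)).toReal := by
        rw [hcpow, one_mul]


end
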